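/- Let μ : ℝ⁺ → ℝ⁺ be C¹ with μ' ≤ 0 and μ(∞) = 0. If w, ŵ ∈ H¹_μ(ℝ⁺, H¹₀(Ω)) with w(0) = ŵ(0) = 0, then (∂_s w − ∂_s ŵ, w − ŵ)_μ = −(1/2) ∫₀^∞ ‖∇(w(s) − ŵ(s))‖²_{L²(Ω)} μ'(s) ds ≥ 0. In particular, the operator T₃(w) = ∂_s w with domain {w ∈ H¹_μ(ℝ⁺, H¹₀(Ω)) : w(0) = 0} is monotone on L²_μ(ℝ⁺, H¹₀(Ω)). -/

import Mathlib

open MeasureTheory Set Filter Topology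

set_option maxHeartbeats 2000000 in
/-- If `w, w2 ∈ H¹_μ(ℝ⁺, H¹₀(Ω))` with `w(0) = w2(0) = 0`, `μ' ≤ 0`,
`μ(∞) = 0`, then `(∂ₛw − ∂ₛw2, w − w2)_μ = −(1/2)∫₀^∞ ‖w(s) − w2(s)‖² μ'(s) ds ≥ 0`
(the Hilbert space `V` abstracts `H¹₀(Ω)` with the gradient norm); in particular the
operator `T₃ = ∂ₛ` is monotone. -/
theorem stmt_1 {V : Type*} [NormedAddCommGroup V] [InnerProductSpace ℝ V]
    (μ μ' : ℝ → ℝ)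
    (hμ : ∀ s ∈ Ioi (0:ℝ), HasDerivAt μ (μ' s) s)
    (hμ'le : ∀ s ∈ Ioi (0:ℝ), μ' s ≤ 0)
    (hμpos : ∀ s ∈ Ioi (0:ℝ), 0 < μ s)
    (hμ0 : Tendsto μ atTop (nhds 0))
    (w w2 dw dw₂ : ℝ → V)
    (hw : ∀ s, HasDerivAt w (dw s) s) (hw2 : ∀ s, HasDerivAt w2 (dw₂ s) s)
    (hw0 : w 0 = 0) (hw20 : w2 0 = 0)
    (h1 : IntegrableOn (fun s => μ s * ‖w s - w2 s‖ ^ 2) (Ioi 0))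
    (h2 : IntegrableOn (fun s => μ s * ‖dw s - dw₂ s‖ ^ 2) (Ioi 0))
    (h3 : IntegrableOn (fun s => μ' s * ‖w s - w2 s‖ ^ 2) (Ioi 0)) :
    (∫ s in Ioi (0:ℝ), μ s * (inner ℝ (dw s - dw₂ s) (w s - w2 s) : ℝ))
        = -(1/2) * ∫ s in Ioi (0:ℝ), μ' s * ‖w s - w2 s‖ ^ 2 ∧
    0 ≤ ∫ s in Ioi (0:ℝ), μ s * (inner ℝ (dw s - dw₂ s) (w s - w2 s) : ℝ) := by
  set u : ℝ → V := fun s => w s - w2 s with hu_def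
  set du : ℝ → V := fun s => dw s - dw₂ s with hdu_def
  have hus : ∀ s, HasDerivAt u (du s) s := fun s => (hw s).sub (hw2 s)
  have hu0 : u 0 = 0 := by simp [hu_def, hw0, hw20]
  have hu_cont : Continuous u :=
    continuous_iff_continuousAt.2 fun s => (hus s).continuousAt
  -- measurability of du as pointwise limit of slopes
  have hdu_meas : StronglyMeasurable du := by
    refine stronglyMeasurable_of_tendsto (f := fun (n : ℕ) (s : ℝ) =>
        ((n : ℝ) + 1) • (u (s + ((n : ℝ) + 1)⁻¹) - u s)) atTop (fun n => ?_)
      (tendsto_pi_nhds.2 fun s => ?_)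
    · exact (Continuous.smul continuous_const
        ((hu_cont.comp (continuous_id.add continuous_const)).sub hu_cont)).stronglyMeasurable
    · have h := hasDerivAt_iff_tendsto_slope.1 (hus s)
      have hseq : Tendsto (fun n : ℕ => s + ((n : ℝ) + 1)⁻¹) atTop (𝓝[≠] s) := by
        apply tendsto_nhdsWithin_iff.2
        constructor
        · have hz : Tendsto (fun n : ℕ => ((n : ℝ) + 1)⁻¹) atTop (𝓝 0) :=
            tendsto_one_div_add_atTop_nhds_zero_nat.congr (fun n => by rw [one_div])
          simpa using tendsto_const_nhds.add hz
        · filter_upwards with n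
          have hp : (0:ℝ) < ((n : ℝ) + 1)⁻¹ := by positivity
          simp only [mem_compl_iff, mem_singleton_iff]
          intro hcon
          nlinarith
      refine (h.comp hseq).congr fun n => ?_
      simp only [Function.comp, slope_def_module]
      congr 1
      field_simp
      ring
  have hμcont : ContinuousOn μ (Ioi 0) := fun s hs =>
    (hμ s hs).continuousAt.continuousWithinAt
  have hμm : AEStronglyMeasurable μ (volume.restrict (Ioi (0:ℝ))) :=
    hμcont.aestronglyMeasurable measurableSet_Ioi
  -- integrability of the cross term
  have hI : IntegrableOn (fun s => μ s * (inner ℝ (du s) (u s) : ℝ)) (Ioi 0) := by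
    apply Integrable.mono'
      (g := fun s => (1/2) * (μ s * ‖du s‖ ^ 2 + μ s * ‖u s‖ ^ 2))
    · exact (h2.add h1).const_mul _
    · exact hμm.mul (hdu_meas.aestronglyMeasurable.inner hu_cont.aestronglyMeasurable)
    · filter_upwards [ae_restrict_mem measurableSet_Ioi] with s hs
      have hμs := hμpos s hs
      have hinner := abs_real_inner_le_norm (du s) (u s)
      rw [Real.norm_eq_abs, abs_mul, abs_of_nonneg hμs.le]
      nlinarith [sq_nonneg (‖du s‖ - ‖u s‖), norm_nonneg (du s), norm_nonneg (u s),
        abs_nonneg (inner ℝ (du s) (u s) : ℝ)]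
  set g : ℝ → ℝ := fun s => μ' s * ‖u s‖ ^ 2 + 2 * (μ s * (inner ℝ (du s) (u s) : ℝ)) with hg_def
  have hg_int : IntegrableOn g (Ioi 0) := h3.add (hI.const_mul 2)
  set F : ℝ → ℝ := fun s => μ s * ‖u s‖ ^ 2 with hF_def
  have hF_deriv : ∀ s ∈ Ioi (0:ℝ), HasDerivAt F (g s) s := by
    intro s hs
    have hn : HasDerivAt (fun t => ‖u t‖ ^ 2) (2 * (inner ℝ (du s) (u s) : ℝ)) s := by
      have h := (hus s).inner ℝ (hus s)
      have heq : (fun t => (inner ℝ (u t) (u t) : ℝ)) = fun t => ‖u t‖ ^ 2 :=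
        funext fun t => real_inner_self_eq_norm_sq (u t)
      rw [heq] at h
      exact h.congr_deriv (by rw [real_inner_comm (u s) (du s)]; ring)
    have hmul := (hμ s hs).mul hn
    exact hmul.congr_deriv (by simp only [hg_def]; ring)
  have hF_nonneg : ∀ s ∈ Ioi (0:ℝ), 0 ≤ F s := fun s hs => by
    have := hμpos s hs; positivity
  -- F tends to a limit m at infinity
  have h1' : IntegrableOn F (Ioi 0) := h1
  set m : ℝ := F 1 + ∫ s in Ioi (1:ℝ), g s with hm_def
  have hFT : Tendsto F atTop (𝓝 m) := by
    have hgi1 : IntegrableOn g (Ioi 1) := hg_int.mono_set (Ioi_subset_Ioi (by norm_num))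
    have htl := intervalIntegral_tendsto_integral_Ioi 1 hgi1 tendsto_id
    have := tendsto_const_nhds (x := F 1) (f := atTop (α := ℝ)) |>.add htl
    refine Tendsto.congr' ?_ this
    filter_upwards [Ioi_mem_atTop (1:ℝ)] with b hb
    have hFTC : ∫ s in (1:ℝ)..b, g s = F b - F 1 := by
      apply intervalIntegral.integral_eq_sub_of_hasDerivAt
      · intro t ht
        apply hF_deriv
        rw [uIcc_of_le (le_of_lt hb)] at ht
        exact lt_of_lt_of_le one_pos ht.1
      · rw [intervalIntegrable_iff]
        apply hg_int.mono_set
        rw [uIoc_of_le (le_of_lt hb)]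
        exact fun t ht => lt_trans one_pos ht.1
    simp only [id_eq]
    rw [hFTC]; ring
  -- the limit m is zero
  have hm0 : m = 0 := by
    by_contra hm
    have hmge : 0 ≤ m := by
      apply ge_of_tendsto hFT
      filter_upwards [Ioi_mem_atTop (0:ℝ)] with s hs
      exact hF_nonneg s hs
    have hmpos : 0 < m := lt_of_le_of_ne hmge (Ne.symm hm)
    have hev : ∀ᶠ s in atTop, m / 2 < F s :=
      hFT.eventually (eventually_gt_nhds (by linarith))
    obtain ⟨A, hA⟩ := (hev.and (Ioi_mem_atTop (0:ℝ))).exists_forall_of_atTop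
    have hconst : IntegrableOn (fun _ : ℝ => m / 2) (Ioi A) := by
      apply Integrable.mono' (h1'.mono_set (fun t ht => (hA t (le_of_lt ht)).2))
        aestronglyMeasurable_const
      filter_upwards [ae_restrict_mem measurableSet_Ioi] with t ht
      rw [Real.norm_eq_abs, abs_of_nonneg (by linarith)]
      exact le_of_lt (hA t (le_of_lt ht)).1
    rw [IntegrableOn, integrable_const_iff] at hconst
    rcases hconst with h | h
    · exact hm (by linarith [h])
    · have h' := h.measure_univ_lt_top
      simp [Real.volume_Ioi] at h'
  -- the bound F ε ≤ ε * C near zero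
  set C : ℝ := (∫ s in Ioi (0:ℝ), μ s * ‖du s‖ ^ 2) + 1 with hC_def
  have hCpos : 0 < C := by
    have : 0 ≤ ∫ s in Ioi (0:ℝ), μ s * ‖du s‖ ^ 2 :=
      setIntegral_nonneg measurableSet_Ioi fun s hs => by
        have := hμpos s hs; positivity
    linarith
  have hmono : AntitoneOn μ (Ioi 0) := by
    apply antitoneOn_of_deriv_nonpos (convex_Ioi 0) hμcont
    · intro s hs
      rw [interior_Ioi] at hs
      exact (hμ s hs).differentiableAt.differentiableWithinAt
    · intro s hs
      rw [interior_Ioi] at hs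
      rw [(hμ s hs).deriv]
      exact hμ'le s hs
  have hFbound : ∀ ε : ℝ, 0 < ε → F ε ≤ ε * C := by
    intro ε hε
    have hμε := hμpos ε hε
    have hμleε : ∀ s ∈ Ioc (0:ℝ) ε, μ ε ≤ μ s := fun s hs =>
      hmono hs.1 hε hs.2
    set t : ℝ := Real.sqrt (μ ε * C / ε) with ht_def
    have ht : 0 < t := Real.sqrt_pos.2 (by positivity)
    have ht2 : t ^ 2 = μ ε * C / ε := Real.sq_sqrt (by positivity)
    -- integrability of 1/μ on (0, ε]
    have hAcont : ContinuousOn (fun s => (μ s)⁻¹) (Ioc 0 ε) :=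
      ContinuousOn.inv₀ (hμcont.mono Ioc_subset_Ioi_self)
        (fun s hs => ne_of_gt (hμpos s hs.1))
    have hAint : IntegrableOn (fun s => (μ s)⁻¹) (Ioc 0 ε) := by
      apply Integrable.mono' (integrableOn_const (C := (μ ε)⁻¹) measure_Ioc_lt_top.ne)
        (hAcont.aestronglyMeasurable measurableSet_Ioc)
      filter_upwards [ae_restrict_mem measurableSet_Ioc] with s hs
      rw [Real.norm_eq_abs, abs_of_nonneg (le_of_lt (inv_pos.2 (hμpos s hs.1)))]
      exact inv_anti₀ hμε (hμleε s hs)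
    have hBint : IntegrableOn (fun s => μ s * ‖du s‖ ^ 2) (Ioc 0 ε) :=
      h2.mono_set Ioc_subset_Ioi_self
    -- pointwise AM-GM bound on ‖du‖
    have hptw : ∀ s ∈ Ioc (0:ℝ) ε,
        ‖du s‖ ≤ (1/2) * (t * (μ s)⁻¹ + μ s * ‖du s‖ ^ 2 / t) := by
      intro s hs
      have hμs := hμpos s hs.1
      have heq : (1/2) * (t * (μ s)⁻¹ + μ s * ‖du s‖ ^ 2 / t)
          = (t ^ 2 + (μ s * ‖du s‖) ^ 2) / (2 * (μ s * t)) := by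
        field_simp
      rw [heq, le_div_iff₀ (by positivity)]
      nlinarith [sq_nonneg (t - μ s * ‖du s‖), norm_nonneg (du s)]
    have hGint : IntegrableOn (fun s => (1/2) * (t * (μ s)⁻¹ + μ s * ‖du s‖ ^ 2 / t))
        (Ioc 0 ε) := ((hAint.const_mul t).add (hBint.div_const t)).const_mul _
    have hduint : IntegrableOn (fun s => ‖du s‖) (Ioc 0 ε) := by
      apply Integrable.mono' hGint hdu_meas.norm.aestronglyMeasurable
      filter_upwards [ae_restrict_mem measurableSet_Ioc] with s hs
      rw [norm_norm]
      exact hptw s hs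
    -- scalar FTC bound on ‖u ε‖
    have hnormu : ‖u ε‖ ≤ ∫ s in Ioc (0:ℝ) ε, ‖du s‖ := by
      rcases eq_or_ne (u ε) 0 with h0 | h0
      · rw [h0, norm_zero]
        exact setIntegral_nonneg measurableSet_Ioc fun s _ => norm_nonneg _
      set e : V := ‖u ε‖⁻¹ • u ε with he_def
      have hne : ‖e‖ = 1 := norm_smul_inv_norm h0
      have hφ : ∀ s, HasDerivAt (fun r => (inner ℝ (u r) e : ℝ)) (inner ℝ (du s) e : ℝ) s := by
        intro s
        have h := (hus s).inner ℝ (hasDerivAt_const s e)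
        simpa using h
      have hφint : IntervalIntegrable (fun s => (inner ℝ (du s) e : ℝ)) volume 0 ε := by
        rw [intervalIntegrable_iff, uIoc_of_le (le_of_lt hε)]
        apply Integrable.mono' hduint
          ((hdu_meas.aestronglyMeasurable.inner aestronglyMeasurable_const).restrict)
        filter_upwards with s
        calc ‖(inner ℝ (du s) e : ℝ)‖ ≤ ‖du s‖ * ‖e‖ := norm_inner_le_norm _ _
          _ = ‖du s‖ := by rw [hne, mul_one]
      have hFTC2 := intervalIntegral.integral_eq_sub_of_hasDerivAt
        (f := fun r => (inner ℝ (u r) e : ℝ)) (fun s _ => hφ s) hφint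
      have hval : (inner ℝ (u ε) e : ℝ) = ‖u ε‖ := by
        rw [he_def, real_inner_smul_right, real_inner_self_eq_norm_sq, pow_two,
          ← mul_assoc, inv_mul_cancel₀ (norm_ne_zero_iff.2 h0), one_mul]
      have hzero : (inner ℝ (u 0) e : ℝ) = 0 := by rw [hu0, inner_zero_left]
      have : ‖u ε‖ = ∫ s in (0:ℝ)..ε, (inner ℝ (du s) e : ℝ) := by
        rw [hFTC2]
        simp only [hval, hzero, sub_zero]
      have hφint' : IntegrableOn (fun s => (inner ℝ (du s) e : ℝ)) (Ioc 0 ε) := by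
        have h' := intervalIntegrable_iff.1 hφint
        rwa [uIoc_of_le (le_of_lt hε)] at h'
      rw [this, intervalIntegral.integral_of_le (le_of_lt hε)]
      refine setIntegral_mono_on hφint' hduint measurableSet_Ioc fun s _ => ?_
      calc (inner ℝ (du s) e : ℝ) ≤ ‖du s‖ * ‖e‖ := real_inner_le_norm _ _
        _ = ‖du s‖ := by rw [hne, mul_one]
    -- bounds on the two integrals
    have hint1 : ∫ s in Ioc (0:ℝ) ε, (μ s)⁻¹ ≤ (μ ε)⁻¹ * ε := by
      have := setIntegral_mono_on hAint (integrableOn_const measure_Ioc_lt_top.ne)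
        measurableSet_Ioc (fun s hs => inv_anti₀ hμε (hμleε s hs))
      rw [setIntegral_const] at this
      simpa [Real.volume_Ioc, ENNReal.toReal_ofReal (le_of_lt hε), max_eq_left hε.le, mul_comm] using this
    have hint2 : ∫ s in Ioc (0:ℝ) ε, μ s * ‖du s‖ ^ 2 ≤ C := by
      have hle : ∫ s in Ioc (0:ℝ) ε, μ s * ‖du s‖ ^ 2
          ≤ ∫ s in Ioi (0:ℝ), μ s * ‖du s‖ ^ 2 := by
        apply setIntegral_mono_set h2
        · filter_upwards [ae_restrict_mem measurableSet_Ioi] with s hs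
          have := hμpos s hs; positivity
        · exact HasSubset.Subset.eventuallyLE Ioc_subset_Ioi_self
      linarith
    have hnorm2 : ∫ s in Ioc (0:ℝ) ε, ‖du s‖
        ≤ (1/2) * (t * ((μ ε)⁻¹ * ε) + C / t) := by
      have step1 : ∫ s in Ioc (0:ℝ) ε, ‖du s‖
          ≤ ∫ s in Ioc (0:ℝ) ε, (1/2) * (t * (μ s)⁻¹ + μ s * ‖du s‖ ^ 2 / t) :=
        setIntegral_mono_on hduint hGint measurableSet_Ioc hptw
      have step2 : ∫ s in Ioc (0:ℝ) ε, (1/2) * (t * (μ s)⁻¹ + μ s * ‖du s‖ ^ 2 / t)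
          = (1/2) * (t * (∫ s in Ioc (0:ℝ) ε, (μ s)⁻¹)
            + (∫ s in Ioc (0:ℝ) ε, μ s * ‖du s‖ ^ 2) / t) := by
        rw [integral_const_mul, integral_add (hAint.const_mul t) (hBint.div_const t),
          integral_const_mul, integral_div]
      have hfin : (1/2) * (t * (∫ s in Ioc (0:ℝ) ε, (μ s)⁻¹)
            + (∫ s in Ioc (0:ℝ) ε, μ s * ‖du s‖ ^ 2) / t)
          ≤ (1/2) * (t * ((μ ε)⁻¹ * ε) + C / t) := by
        have h1le : t * (∫ s in Ioc (0:ℝ) ε, (μ s)⁻¹) ≤ t * ((μ ε)⁻¹ * ε) :=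
          mul_le_mul_of_nonneg_left hint1 (le_of_lt ht)
        have h2le : (∫ s in Ioc (0:ℝ) ε, μ s * ‖du s‖ ^ 2) / t ≤ C / t :=
          (div_le_div_iff_of_pos_right ht).2 hint2
        exact mul_le_mul_of_nonneg_left (add_le_add h1le h2le) (by norm_num)
      exact step1.trans ((le_of_eq step2).trans hfin)
    -- conclude
    have hR : (0:ℝ) ≤ (1/2) * (t * ((μ ε)⁻¹ * ε) + C / t) := by positivity
    have hu2 : ‖u ε‖ ^ 2 ≤ ((1/2) * (t * ((μ ε)⁻¹ * ε) + C / t)) ^ 2 :=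
      pow_le_pow_left₀ (norm_nonneg _) (le_trans hnormu hnorm2) 2
    have hFle : F ε ≤ μ ε * ((1/2) * (t * ((μ ε)⁻¹ * ε) + C / t)) ^ 2 :=
      mul_le_mul_of_nonneg_left hu2 (le_of_lt hμε)
    have harith : μ ε * ((1/2) * (t * ((μ ε)⁻¹ * ε) + C / t)) ^ 2 = ε * C := by
      have hq : t ^ 2 * ε = μ ε * C := by
        rw [ht2]; field_simp
      have h5 : t * ((μ ε)⁻¹ * ε) + C / t = 2 * C / t := by
        rw [eq_div_iff ht.ne', add_mul, div_mul_cancel₀ C ht.ne',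
          show t * ((μ ε)⁻¹ * ε) * t = t ^ 2 * ε * (μ ε)⁻¹ by ring, hq,
          mul_right_comm (μ ε) C, mul_inv_cancel₀ hμε.ne', one_mul]
        ring
      rw [h5, show μ ε * ((1/2) * (2 * C / t)) ^ 2 = μ ε * C ^ 2 / t ^ 2 by ring,
        div_eq_iff (by positivity)]
      linear_combination -C * hq
    exact hFle.trans harith.le
  -- the integral of g over (0, ∞) equals m = 0
  have hseq : Tendsto (fun n : ℕ => ((n : ℝ) + 1)⁻¹) atTop (𝓝 0) :=
    tendsto_one_div_add_atTop_nhds_zero_nat.congr (fun n => by rw [one_div])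
  have hseqpos : ∀ n : ℕ, (0:ℝ) < ((n : ℝ) + 1)⁻¹ := fun n => by positivity
  have hkey : ∀ n : ℕ, ∫ s in Ioi (((n:ℝ) + 1)⁻¹), g s = m - F (((n:ℝ) + 1)⁻¹) := by
    intro n
    apply integral_Ioi_of_hasDerivAt_of_tendsto
    · exact (hF_deriv _ (hseqpos n)).continuousAt.continuousWithinAt
    · exact fun x hx => hF_deriv x (lt_trans (hseqpos n) hx)
    · exact hg_int.mono_set (Ioi_subset_Ioi (le_of_lt (hseqpos n)))
    · exact hFT
  have hUnion : (⋃ n : ℕ, Ioi (((n:ℝ) + 1)⁻¹)) = Ioi (0:ℝ) := by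
    ext x
    simp only [mem_iUnion, mem_Ioi]
    constructor
    · rintro ⟨n, hn⟩; exact lt_trans (hseqpos n) hn
    · intro hx
      obtain ⟨n, hn⟩ := exists_nat_one_div_lt hx
      exact ⟨n, by rwa [one_div] at hn⟩
  have hmonoset : Monotone fun n : ℕ => Ioi (((n:ℝ) + 1)⁻¹) := by
    intro a b hab
    apply Ioi_subset_Ioi
    apply inv_anti₀ (by positivity)
    have : (a:ℝ) ≤ b := Nat.cast_le.2 hab
    linarith
  have htendI : Tendsto (fun n : ℕ => ∫ s in Ioi (((n:ℝ) + 1)⁻¹), g s) atTop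
      (𝓝 (∫ s in Ioi (0:ℝ), g s)) := by
    have hUint : IntegrableOn g (⋃ n : ℕ, Ioi (((n:ℝ) + 1)⁻¹)) := by rwa [hUnion]
    have hres := tendsto_setIntegral_of_monotone (fun n : ℕ => measurableSet_Ioi)
      hmonoset hUint
    rwa [hUnion] at hres
  have htendF : Tendsto (fun n : ℕ => F (((n:ℝ) + 1)⁻¹)) atTop (𝓝 0) := by
    apply squeeze_zero (fun n => hF_nonneg _ (hseqpos n))
      (fun n => hFbound _ (hseqpos n))
    simpa using hseq.mul_const C
  have hgint0 : ∫ s in Ioi (0:ℝ), g s = m := by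
    have h1t : Tendsto (fun n : ℕ => ∫ s in Ioi (((n:ℝ) + 1)⁻¹), g s) atTop (𝓝 m) := by
      have : Tendsto (fun n : ℕ => m - F (((n:ℝ) + 1)⁻¹)) atTop (𝓝 (m - 0)) :=
        tendsto_const_nhds.sub htendF
      rw [sub_zero] at this
      exact Tendsto.congr (fun n => (hkey n).symm) this
    exact tendsto_nhds_unique htendI h1t
  rw [hm0] at hgint0
  -- split the integral
  have hsplit : ∫ s in Ioi (0:ℝ), g s
      = (∫ s in Ioi (0:ℝ), μ' s * ‖u s‖ ^ 2)
        + 2 * ∫ s in Ioi (0:ℝ), μ s * (inner ℝ (du s) (u s) : ℝ) := by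
    rw [hg_def]
    rw [integral_add h3 (hI.const_mul 2), integral_const_mul]
  have hmain : (∫ s in Ioi (0:ℝ), μ s * (inner ℝ (du s) (u s) : ℝ))
      = -(1/2) * ∫ s in Ioi (0:ℝ), μ' s * ‖u s‖ ^ 2 := by
    rw [hsplit] at hgint0; linarith
  refine ⟨hmain, ?_⟩
  rw [hmain]
  have hneg : ∫ s in Ioi (0:ℝ), μ' s * ‖u s‖ ^ 2 ≤ 0 :=
    setIntegral_nonpos measurableSet_Ioi fun s hs =>
      mul_nonpos_of_nonpos_of_nonneg (hμ'le s hs) (by positivity)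
  linarith
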